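/- The map ι: x ↦ x + v(x)·d±(x) on the intersection of the hyperboloid H: Ax1²+Bx2²+Cx3²+D = 0 (ABCD ≥ 0) and the cylinder C: αx1²+βx3²+γ = 0 is an involution: ι(ι(x)) = x, where d±(x) = (ABCx1x3 ∓ √(ABCD)Bx2, ABCx2x3 ± √(ABCD)Ax1, −AB(Ax1²+Bx2²)) and v(x) = −2(α·(d±(x))1·x1 + β·(d±(x))3·x3)/(α·(d±(x))1² + β·(d±(x))3²). -/
import Mathlib

/-- Ruling direction `d±(x)` with `s = ±√(ABCD)`. -/
noncomputable def dvec (A B C s : ℝ) (x : ℝ × ℝ × ℝ) : ℝ × ℝ × ℝ :=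
  (A*B*C*x.1*x.2.2 - s*B*x.2.1,
   A*B*C*x.2.1*x.2.2 + s*A*x.1,
   -(A*B)*(A*x.1^2 + B*x.2.1^2))

/-- The step length `v(x)` for the cylinder `α x₁² + β x₃² + γ = 0`. -/
noncomputable def vstep (A B C s α β : ℝ) (x : ℝ × ℝ × ℝ) : ℝ :=
  -2 * (α*(dvec A B C s x).1*x.1 + β*(dvec A B C s x).2.2*x.2.2) /
    (α*(dvec A B C s x).1^2 + β*(dvec A B C s x).2.2^2)

/-- The involution `ι : x ↦ x + v(x)·d±(x)`. -/
noncomputable def iotaMap (A B C s α β : ℝ) (x : ℝ × ℝ × ℝ) : ℝ × ℝ × ℝ :=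
  (x.1 + vstep A B C s α β x * (dvec A B C s x).1,
   x.2.1 + vstep A B C s α β x * (dvec A B C s x).2.1,
   x.2.2 + vstep A B C s α β x * (dvec A B C s x).2.2)

private lemma aux_inv (α β Q L Qy Ly M v vy d1 d2 d3 dy1 dy2 dy3 x1 x3 : ℝ)
    (hQ : Q = α*d1^2 + β*d3^2)
    (hL : L = α*d1*x1 + β*d3*x3)
    (hQydef : Qy = α*dy1^2 + β*dy3^2)
    (hLydef : Ly = α*dy1*(x1 + v*d1) + β*dy3*(x3 + v*d3))
    (hvQ : v * Q = -(2*L)) (hvyQ : vy * Qy = -(2*Ly))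
    (h1 : Q^2*dy1 = M*d1) (h2 : Q^2*dy2 = M*d2) (h3 : Q^2*dy3 = M*d3)
    (hQ0 : Q ≠ 0) (hQy0 : Qy ≠ 0) :
    v*d1 + vy*dy1 = 0 ∧ v*d2 + vy*dy2 = 0 ∧ v*d3 + vy*dy3 = 0 := by
  have hQy4 : Q^4*Qy = M^2*Q := by
    linear_combination Q^4*hQydef + (α*(Q^2*dy1 + M*d1))*h1 + (β*(Q^2*dy3 + M*d3))*h3 - M^2*hQ
  have hLy3 : Q^3*Ly = -(M*L*Q) := by
    linear_combination Q^3*hLydef + (α*Q*(x1+v*d1))*h1 + (β*Q*(x3+v*d3))*h3 - (M*Q)*hL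
      - (M*Q*v)*hQ + (M*Q)*hvQ
  have fin : ∀ di dyi : ℝ, Q^2*dyi = M*di → v*di + vy*dyi = 0 := by
    intro di dyi hi
    have hkey : Q^5*(L*di*Qy + Ly*dyi*Q) = 0 := by
      linear_combination (L*di*Q)*hQy4 + (Q^3*dyi)*hLy3 + (-(M*L*Q^2))*hi
    have hk : L*di*Qy + Ly*dyi*Q = 0 := by
      rcases mul_eq_zero.mp hkey with h | h
      · exact absurd h (pow_ne_zero 5 hQ0)
      · exact h
    have h : (v*di + vy*dyi) * (Q*Qy) = 0 := by
      linear_combination (di*Qy)*hvQ + (dyi*Q)*hvyQ + (-2)*hk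
    rcases mul_eq_zero.mp h with h' | h'
    · exact h'
    · exact absurd h' (mul_ne_zero hQ0 hQy0)
  exact ⟨fin d1 dy1 h1, fin d2 dy2 h2, fin d3 dy3 h3⟩

set_option maxHeartbeats 4000000 in
theorem stmt_7 (A B C D α β γ s : ℝ) (x : ℝ × ℝ × ℝ)
    (hABCD : A*B*C*D ≥ 0) (hs : s^2 = A*B*C*D)
    (hH : A*x.1^2 + B*x.2.1^2 + C*x.2.2^2 + D = 0)
    (hC : α*x.1^2 + β*x.2.2^2 + γ = 0)
    (hden : α*(dvec A B C s x).1^2 + β*(dvec A B C s x).2.2^2 ≠ 0)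
    (hden' : α*(dvec A B C s (iotaMap A B C s α β x)).1^2
        + β*(dvec A B C s (iotaMap A B C s α β x)).2.2^2 ≠ 0) :
    iotaMap A B C s α β (iotaMap A B C s α β x) = x := by
  obtain ⟨x1, x2, x3⟩ := x
  have hH' : A*x1^2 + B*x2^2 + C*x3^2 + D = 0 := hH
  have hC' : α*x1^2 + β*x3^2 + γ = 0 := hC
  have hQ0 : (α*(A*B*C*x1*x3 - s*B*x2)^2 + β*(-(A*B)*(A*x1^2 + B*x2^2))^2) ≠ 0 := hden
  have hQy0 : (α*(A*B*C*(x1 + (vstep A B C s α β (x1, x2, x3))*(A*B*C*x1*x3 - s*B*x2))*(x3 + (vstep A B C s α β (x1, x2, x3))*(-(A*B)*(A*x1^2 + B*x2^2))) - s*B*(x2 + (vstep A B C s α β (x1, x2, x3))*(A*B*C*x2*x3 + s*A*x1)))^2 + β*(-(A*B)*(A*(x1 + (vstep A B C s α β (x1, x2, x3))*(A*B*C*x1*x3 - s*B*x2))^2 + B*(x2 + (vstep A B C s α β (x1, x2, x3))*(A*B*C*x2*x3 + s*A*x1))^2))^2) ≠ 0 := hden'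
  have hvQ : (vstep A B C s α β (x1, x2, x3)) * (α*(A*B*C*x1*x3 - s*B*x2)^2 + β*(-(A*B)*(A*x1^2 + B*x2^2))^2) = -(2*(α*(A*B*C*x1*x3 - s*B*x2)*x1 + β*(-(A*B)*(A*x1^2 + B*x2^2))*x3)) := by
    rw [show (vstep A B C s α β (x1, x2, x3)) = -2*(α*(A*B*C*x1*x3 - s*B*x2)*x1 + β*(-(A*B)*(A*x1^2 + B*x2^2))*x3)/(α*(A*B*C*x1*x3 - s*B*x2)^2 + β*(-(A*B)*(A*x1^2 + B*x2^2))^2) from rfl, div_mul_cancel₀ _ hQ0]; ring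
  have hvyQ : (vstep A B C s α β (iotaMap A B C s α β (x1, x2, x3))) * (α*(A*B*C*(x1 + (vstep A B C s α β (x1, x2, x3))*(A*B*C*x1*x3 - s*B*x2))*(x3 + (vstep A B C s α β (x1, x2, x3))*(-(A*B)*(A*x1^2 + B*x2^2))) - s*B*(x2 + (vstep A B C s α β (x1, x2, x3))*(A*B*C*x2*x3 + s*A*x1)))^2 + β*(-(A*B)*(A*(x1 + (vstep A B C s α β (x1, x2, x3))*(A*B*C*x1*x3 - s*B*x2))^2 + B*(x2 + (vstep A B C s α β (x1, x2, x3))*(A*B*C*x2*x3 + s*A*x1))^2))^2) = -(2*(α*(A*B*C*(x1 + (vstep A B C s α β (x1, x2, x3))*(A*B*C*x1*x3 - s*B*x2))*(x3 + (vstep A B C s α β (x1, x2, x3))*(-(A*B)*(A*x1^2 + B*x2^2))) - s*B*(x2 + (vstep A B C s α β (x1, x2, x3))*(A*B*C*x2*x3 + s*A*x1)))*(x1 + (vstep A B C s α β (x1, x2, x3))*(A*B*C*x1*x3 - s*B*x2)) + β*(-(A*B)*(A*(x1 + (vstep A B C s α β (x1, x2, x3))*(A*B*C*x1*x3 - s*B*x2))^2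 + B*(x2 + (vstep A B C s α β (x1, x2, x3))*(A*B*C*x2*x3 + s*A*x1))^2))*(x3 + (vstep A B C s α β (x1, x2, x3))*(-(A*B)*(A*x1^2 + B*x2^2))))) := by
    rw [show (vstep A B C s α β (iotaMap A B C s α β (x1, x2, x3))) = -2*(α*(A*B*C*(x1 + (vstep A B C s α β (x1, x2, x3))*(A*B*C*x1*x3 - s*B*x2))*(x3 + (vstep A B C s α β (x1, x2, x3))*(-(A*B)*(A*x1^2 + B*x2^2))) - s*B*(x2 + (vstep A B C s α β (x1, x2, x3))*(A*B*C*x2*x3 + s*A*x1)))*(x1 + (vstep A B C s α β (x1, x2, x3))*(A*B*C*x1*x3 - s*B*x2)) + β*(-(A*B)*(A*(x1 + (vstep A B C s α β (x1, x2, x3))*(A*B*C*x1*x3 - s*B*x2))^2 + B*(x2 + (vstep A B C s α β (x1, x2, x3))*(A*B*C*x2*x3 + s*A*x1))^2))*(x3 + (vstep A B C s α β (x1, x2, x3))*(-(A*B)*(A*x1^2 + B*x2^2))))/(α*(A*B*C*(x1 + (vstep A B C s α β (x1, x2, x3))*(A*B*C*x1*x3 - s*B*x2))*(x3 + (vstep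 A B C s α β (x1, x2, x3))*(-(A*B)*(A*x1^2 + B*x2^2))) - s*B*(x2 + (vstep A B C s α β (x1, x2, x3))*(A*B*C*x2*x3 + s*A*x1)))^2 + β*(-(A*B)*(A*(x1 + (vstep A B C s α β (x1, x2, x3))*(A*B*C*x1*x3 - s*B*x2))^2 + B*(x2 + (vstep A B C s α β (x1, x2, x3))*(A*B*C*x2*x3 + s*A*x1))^2))^2) from rfl, div_mul_cancel₀ _ hQy0]; ring
  have hdy1 : (α*(A*B*C*x1*x3 - s*B*x2)^2 + β*(-(A*B)*(A*x1^2 + B*x2^2))^2)^2 * (A*B*C*(x1 + (vstep A B C s α β (x1, x2, x3))*(A*B*C*x1*x3 - s*B*x2))*(x3 + (vstep A B C s α β (x1, x2, x3))*(-(A*B)*(A*x1^2 + B*x2^2))) - s*B*(x2 + (vstep A B C s α β (x1, x2, x3))*(A*B*C*x2*x3 + s*A*x1))) = (A^2*B^6*C^4*α^2*x2^4*x3^4 + 2*A^2*B^7*C^3*α^2*x2^6*x3^2 + A^2*B^8*C^2*α^2*x2^8 + 8*A^3*B^4*C^3*α^2*s*x1^3*x2*x3^3 - 8*A^3*B^5*C^2*α*β*s*x1*x2^3*x3^3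 + 8*A^3*B^5*C^2*α^2*s*x1^3*x2^3*x3 + 6*A^3*B^5*C^4*α^2*x1^2*x2^2*x3^4 - 8*A^3*B^6*C*α*β*s*x1*x2^5*x3 - 4*A^3*B^6*C^3*α*β*x2^4*x3^4 + 12*A^3*B^6*C^3*α^2*x1^2*x2^4*x3^2 - 6*A^3*B^7*C^2*α*β*x2^6*x3^2 + 6*A^3*B^7*C^2*α^2*x1^2*x2^6 - 2*A^3*B^8*C*α*β*x2^8 - 8*A^4*B^4*C^2*α*β*s*x1^3*x2*x3^3 + 8*A^4*B^4*C^2*α^2*s*x1^5*x2*x3 - 3*A^4*B^4*C^4*α^2*x1^4*x3^4 - 16*A^4*B^5*C*α*β*s*x1^3*x2^3*x3 + 6*A^4*B^5*C^3*α^2*x1^4*x2^2*x3^2 - 6*A^4*B^6*C^2*α*β*x1^2*x2^4*x3^2 + 9*A^4*B^6*C^2*α^2*x1^4*x2^4 - 6*A^4*B^7*C*α*β*x1^2*x2^6 + A^4*B^8*β^2*x2^8 - 8*A^5*B^4*C*α*β*s*x1^5*x2*x3 + 4*A^5*B^4*C^3*α*β*x1^4*x3^4 - 4*A^5*B^4*C^3*α^2*x1^6*x3^2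 + 6*A^5*B^5*C^2*α*β*x1^4*x2^2*x3^2 + 4*A^5*B^5*C^2*α^2*x1^6*x2^2 - 6*A^5*B^6*C*α*β*x1^4*x2^4 + 4*A^5*B^7*β^2*x1^2*x2^6 + 6*A^6*B^4*C^2*α*β*x1^6*x3^2 - 2*A^6*B^5*C*α*β*x1^6*x2^2 + 6*A^6*B^6*β^2*x1^4*x2^4 + 4*A^7*B^5*β^2*x1^6*x2^2 + A^8*B^4*β^2*x1^8) * (A*B*C*x1*x3 - s*B*x2) := by
    linear_combination ((α*(A*B*C*x1*x3 - s*B*x2)^2 + β*(-(A*B)*(A*x1^2 + B*x2^2))^2)*(A*B*C*(x1*(-(A*B)*(A*x1^2 + B*x2^2)) + x3*(A*B*C*x1*x3 - s*B*x2)) - s*B*(A*B*C*x2*x3 + s*A*x1)) + ((vstep A B C s α β (x1, x2, x3))*(α*(A*B*C*x1*x3 - s*B*x2)^2 + β*(-(A*B)*(A*x1^2 + B*x2^2))^2) - 2*(α*(A*B*C*x1*x3 - s*B*x2)*x1 + β*(-(A*B)*(A*x1^2 + B*x2^2))*x3))*(A*B*C*(A*B*C*x1*x3 - s*B*x2)*(-(A*B)*(A*x1^2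 + B*x2^2)))) * hvQ + (-B^5*α^2*s^3*x2^5 - 2*A*B^4*α^2*s^3*x1^2*x2^3 + A*B^5*C*α^2*s^2*x1*x2^4*x3 - A*B^6*C*D*α^2*s*x2^5 + 6*A^2*B^4*C*α^2*s^2*x1^3*x2^2*x3 - 2*A^2*B^5*α*β*s^2*x1*x2^4*x3 - 2*A^2*B^5*C*D*α^2*s*x1^2*x2^3 + 4*A^2*B^5*C^2*α^2*s*x1^2*x2^3*x3^2 - 4*A^2*B^6*C*α*β*s*x2^5*x3^2 + 2*A^2*B^6*C*α^2*s*x1^2*x2^5 + A^2*B^6*C^2*D*α^2*x1*x2^4*x3 - 2*A^2*B^7*α*β*s*x2^7 - 2*A^3*B^4*α*β*s^2*x1^3*x2^2*x3 - 6*A^3*B^4*C^2*α^2*s*x1^4*x2*x3^2 + 2*A^3*B^5*C*α^2*s*x1^4*x2^3 + 6*A^3*B^5*C^2*D*α^2*x1^3*x2^2*x3 - 6*A^3*B^6*α*β*s*x1^2*x2^5 - 2*A^3*B^6*C*D*α*β*x1*x2^4*x3 + 2*A^3*B^6*C^2*α*β*x1*x2^4*x3^3 + 2*A^3*B^6*C^2*α^2*x1^3*x2^4*x3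 + 4*A^4*B^4*C*α*β*s*x1^4*x2*x3^2 + 2*A^4*B^4*C^3*α^2*x1^5*x3^3 - 6*A^4*B^5*α*β*s*x1^4*x2^3 - 2*A^4*B^5*C*D*α*β*x1^3*x2^2*x3 + 2*A^4*B^5*C^2*α^2*x1^5*x2^2*x3 + 2*A^4*B^6*C*α*β*x1^3*x2^4*x3 - 2*A^4*B^7*β^2*x1*x2^6*x3 - 2*A^5*B^4*α*β*s*x1^6*x2 - 2*A^5*B^4*C^2*α*β*x1^5*x3^3 + 4*A^5*B^5*C*α*β*x1^5*x2^2*x3 - 6*A^5*B^6*β^2*x1^3*x2^4*x3 + 2*A^6*B^4*C*α*β*x1^7*x3 - 6*A^6*B^5*β^2*x1^5*x2^2*x3 - 2*A^7*B^4*β^2*x1^7*x3) * hs + (-A^2*B^7*C^2*D*α^2*s*x2^5 + A^2*B^7*C^3*α^2*s*x2^5*x3^2 + A^2*B^8*C^2*α^2*s*x2^7 - 2*A^3*B^6*C^2*D*α^2*s*x1^2*x2^3 + 6*A^3*B^6*C^3*α^2*s*x1^2*x2^3*x3^2 - 4*A^3*B^7*C^2*α*β*s*x2^5*x3^2 + 5*A^3*B^7*C^2*α^2*s*x1^2*x2^5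 + A^3*B^7*C^3*D*α^2*x1*x2^4*x3 - A^3*B^7*C^4*α^2*x1*x2^4*x3^3 - 2*A^3*B^8*C*α*β*s*x2^7 - A^3*B^8*C^3*α^2*x1*x2^6*x3 - 6*A^4*B^5*C^3*α^2*s*x1^4*x2*x3^2 + 4*A^4*B^6*C^2*α^2*s*x1^4*x2^3 + 6*A^4*B^6*C^3*D*α^2*x1^3*x2^2*x3 - 6*A^4*B^6*C^4*α^2*x1^3*x2^2*x3^3 - 6*A^4*B^7*C*α*β*s*x1^2*x2^5 - 2*A^4*B^7*C^2*D*α*β*x1*x2^4*x3 + 4*A^4*B^7*C^3*α*β*x1*x2^4*x3^3 - 5*A^4*B^7*C^3*α^2*x1^3*x2^4*x3 + 2*A^4*B^8*C^2*α*β*x1*x2^6*x3 + 4*A^5*B^5*C^2*α*β*s*x1^4*x2*x3^2 + 2*A^5*B^5*C^4*α^2*x1^5*x3^3 - 6*A^5*B^6*C*α*β*s*x1^4*x2^3 - 2*A^5*B^6*C^2*D*α*β*x1^3*x2^2*x3 + 2*A^5*B^6*C^3*α*β*x1^3*x2^2*x3^3 - 4*A^5*B^6*C^3*α^2*x1^5*x2^2*x3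 + 6*A^5*B^7*C^2*α*β*x1^3*x2^4*x3 - 2*A^5*B^8*C*β^2*x1*x2^6*x3 - 2*A^6*B^5*C*α*β*s*x1^6*x2 - 2*A^6*B^5*C^3*α*β*x1^5*x3^3 + 6*A^6*B^6*C^2*α*β*x1^5*x2^2*x3 - 6*A^6*B^7*C*β^2*x1^3*x2^4*x3 + 2*A^7*B^5*C^2*α*β*x1^7*x3 - 6*A^7*B^6*C*β^2*x1^5*x2^2*x3 - 2*A^8*B^5*C*β^2*x1^7*x3) * hH' + (0:ℝ) * hC'
  have hdy2 : (α*(A*B*C*x1*x3 - s*B*x2)^2 + β*(-(A*B)*(A*x1^2 + B*x2^2))^2)^2 * (A*B*C*(x2 + (vstep A B C s α β (x1, x2, x3))*(A*B*C*x2*x3 + s*A*x1))*(x3 + (vstep A B C s α β (x1, x2, x3))*(-(A*B)*(A*x1^2 + B*x2^2))) + s*A*(x1 + (vstep A B C s α β (x1, x2, x3))*(A*B*C*x1*x3 - s*B*x2))) = (A^2*B^6*C^4*α^2*x2^4*x3^4 + 2*A^2*B^7*C^3*α^2*x2^6*x3^2 + A^2*B^8*C^2*α^2*x2^8 + 8*A^3*B^4*C^3*α^2*s*x1^3*x2*x3^3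 - 8*A^3*B^5*C^2*α*β*s*x1*x2^3*x3^3 + 8*A^3*B^5*C^2*α^2*s*x1^3*x2^3*x3 + 6*A^3*B^5*C^4*α^2*x1^2*x2^2*x3^4 - 8*A^3*B^6*C*α*β*s*x1*x2^5*x3 - 4*A^3*B^6*C^3*α*β*x2^4*x3^4 + 12*A^3*B^6*C^3*α^2*x1^2*x2^4*x3^2 - 6*A^3*B^7*C^2*α*β*x2^6*x3^2 + 6*A^3*B^7*C^2*α^2*x1^2*x2^6 - 2*A^3*B^8*C*α*β*x2^8 - 8*A^4*B^4*C^2*α*β*s*x1^3*x2*x3^3 + 8*A^4*B^4*C^2*α^2*s*x1^5*x2*x3 - 3*A^4*B^4*C^4*α^2*x1^4*x3^4 - 16*A^4*B^5*C*α*β*s*x1^3*x2^3*x3 + 6*A^4*B^5*C^3*α^2*x1^4*x2^2*x3^2 - 6*A^4*B^6*C^2*α*β*x1^2*x2^4*x3^2 + 9*A^4*B^6*C^2*α^2*x1^4*x2^4 - 6*A^4*B^7*C*α*β*x1^2*x2^6 + A^4*B^8*β^2*x2^8 - 8*A^5*B^4*C*α*β*s*x1^5*x2*x3 + 4*A^5*B^4*C^3*α*β*x1^4*x3^4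 - 4*A^5*B^4*C^3*α^2*x1^6*x3^2 + 6*A^5*B^5*C^2*α*β*x1^4*x2^2*x3^2 + 4*A^5*B^5*C^2*α^2*x1^6*x2^2 - 6*A^5*B^6*C*α*β*x1^4*x2^4 + 4*A^5*B^7*β^2*x1^2*x2^6 + 6*A^6*B^4*C^2*α*β*x1^6*x3^2 - 2*A^6*B^5*C*α*β*x1^6*x2^2 + 6*A^6*B^6*β^2*x1^4*x2^4 + 4*A^7*B^5*β^2*x1^6*x2^2 + A^8*B^4*β^2*x1^8) * (A*B*C*x2*x3 + s*A*x1) := by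
    linear_combination ((α*(A*B*C*x1*x3 - s*B*x2)^2 + β*(-(A*B)*(A*x1^2 + B*x2^2))^2)*(A*B*C*(x2*(-(A*B)*(A*x1^2 + B*x2^2)) + x3*(A*B*C*x2*x3 + s*A*x1)) + s*A*(A*B*C*x1*x3 - s*B*x2)) + ((vstep A B C s α β (x1, x2, x3))*(α*(A*B*C*x1*x3 - s*B*x2)^2 + β*(-(A*B)*(A*x1^2 + B*x2^2))^2) - 2*(α*(A*B*C*x1*x3 - s*B*x2)*x1 + β*(-(A*B)*(A*x1^2 + B*x2^2))*x3))*(A*B*C*(A*B*C*x2*x3 + s*A*x1)*(-(A*B)*(A*x1^2 + B*x2^2)))) * hvQ + (-A*B^4*α^2*s^3*x1*x2^4 + A*B^5*C*α^2*s^2*x2^5*x3 + 6*A^2*B^4*C*α^2*s^2*x1^2*x2^3*x3 - 2*A^2*B^5*α*β*s^2*x2^5*x3 - A^2*B^5*C*D*α^2*s*x1*x2^4 - 2*A^2*B^5*C^2*α^2*s*x1*x2^4*x3^2 - 2*A^2*B^6*C*α^2*s*x1*x2^6 + A^2*B^6*C^2*D*α^2*x2^5*x3 - 2*A^3*B^4*α*β*s^2*x1^2*x2^3*x3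 - 12*A^3*B^4*C^2*α^2*s*x1^3*x2^2*x3^2 + 8*A^3*B^5*C*α*β*s*x1*x2^4*x3^2 - 6*A^3*B^5*C*α^2*s*x1^3*x2^4 + 6*A^3*B^5*C^2*D*α^2*x1^2*x2^3*x3 - 2*A^3*B^6*C*D*α*β*x2^5*x3 + 2*A^3*B^6*C^2*α*β*x2^5*x3^3 + 2*A^3*B^6*C^2*α^2*x1^2*x2^5*x3 + 8*A^4*B^4*C*α*β*s*x1^3*x2^2*x3^2 - 4*A^4*B^4*C*α^2*s*x1^5*x2^2 + 2*A^4*B^4*C^3*α^2*x1^4*x2*x3^3 - 2*A^4*B^5*C*D*α*β*x1^2*x2^3*x3 + 2*A^4*B^5*C^2*α^2*x1^4*x2^3*x3 + 2*A^4*B^6*C*α*β*x1^2*x2^5*x3 - 2*A^4*B^7*β^2*x2^7*x3 - 2*A^5*B^4*C^2*α*β*x1^4*x2*x3^3 + 4*A^5*B^5*C*α*β*x1^4*x2^3*x3 - 6*A^5*B^6*β^2*x1^2*x2^5*x3 + 2*A^6*B^4*C*α*β*x1^6*x2*x3 - 6*A^6*B^5*β^2*x1^4*x2^3*x3 - 2*A^7*B^4*β^2*x1^6*x2*x3)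 * hs + (-A^3*B^6*C^2*D*α^2*s*x1*x2^4 - A^3*B^6*C^3*α^2*s*x1*x2^4*x3^2 - A^3*B^7*C^2*α^2*s*x1*x2^6 + A^3*B^7*C^3*D*α^2*x2^5*x3 - A^3*B^7*C^4*α^2*x2^5*x3^3 - A^3*B^8*C^3*α^2*x2^7*x3 - 12*A^4*B^5*C^3*α^2*s*x1^3*x2^2*x3^2 + 8*A^4*B^6*C^2*α*β*s*x1*x2^4*x3^2 - 5*A^4*B^6*C^2*α^2*s*x1^3*x2^4 + 6*A^4*B^6*C^3*D*α^2*x1^2*x2^3*x3 - 6*A^4*B^6*C^4*α^2*x1^2*x2^3*x3^3 - 2*A^4*B^7*C^2*D*α*β*x2^5*x3 + 4*A^4*B^7*C^3*α*β*x2^5*x3^3 - 5*A^4*B^7*C^3*α^2*x1^2*x2^5*x3 + 2*A^4*B^8*C^2*α*β*x2^7*x3 + 8*A^5*B^5*C^2*α*β*s*x1^3*x2^2*x3^2 - 4*A^5*B^5*C^2*α^2*s*x1^5*x2^2 + 2*A^5*B^5*C^4*α^2*x1^4*x2*x3^3 - 2*A^5*B^6*C^2*D*α*β*x1^2*x2^3*x3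 + 2*A^5*B^6*C^3*α*β*x1^2*x2^3*x3^3 - 4*A^5*B^6*C^3*α^2*x1^4*x2^3*x3 + 6*A^5*B^7*C^2*α*β*x1^2*x2^5*x3 - 2*A^5*B^8*C*β^2*x2^7*x3 - 2*A^6*B^5*C^3*α*β*x1^4*x2*x3^3 + 6*A^6*B^6*C^2*α*β*x1^4*x2^3*x3 - 6*A^6*B^7*C*β^2*x1^2*x2^5*x3 + 2*A^7*B^5*C^2*α*β*x1^6*x2*x3 - 6*A^7*B^6*C*β^2*x1^4*x2^3*x3 - 2*A^8*B^5*C*β^2*x1^6*x2*x3) * hH' + (0:ℝ) * hC'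
  have hdy3 : (α*(A*B*C*x1*x3 - s*B*x2)^2 + β*(-(A*B)*(A*x1^2 + B*x2^2))^2)^2 * (-(A*B)*(A*(x1 + (vstep A B C s α β (x1, x2, x3))*(A*B*C*x1*x3 - s*B*x2))^2 + B*(x2 + (vstep A B C s α β (x1, x2, x3))*(A*B*C*x2*x3 + s*A*x1))^2)) = (A^2*B^6*C^4*α^2*x2^4*x3^4 + 2*A^2*B^7*C^3*α^2*x2^6*x3^2 + A^2*B^8*C^2*α^2*x2^8 + 8*A^3*B^4*C^3*α^2*s*x1^3*x2*x3^3 - 8*A^3*B^5*C^2*α*β*s*x1*x2^3*x3^3 + 8*A^3*B^5*C^2*α^2*s*x1^3*x2^3*x3 + 6*A^3*B^5*C^4*α^2*x1^2*x2^2*x3^4 - 8*A^3*B^6*C*α*β*s*x1*x2^5*x3 - 4*A^3*B^6*C^3*α*β*x2^4*x3^4 + 12*A^3*B^6*C^3*α^2*x1^2*x2^4*x3^2 - 6*A^3*B^7*C^2*α*β*x2^6*x3^2 + 6*A^3*B^7*C^2*α^2*x1^2*x2^6 - 2*A^3*B^8*C*α*β*x2^8 - 8*A^4*B^4*C^2*α*β*s*x1^3*x2*x3^3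 + 8*A^4*B^4*C^2*α^2*s*x1^5*x2*x3 - 3*A^4*B^4*C^4*α^2*x1^4*x3^4 - 16*A^4*B^5*C*α*β*s*x1^3*x2^3*x3 + 6*A^4*B^5*C^3*α^2*x1^4*x2^2*x3^2 - 6*A^4*B^6*C^2*α*β*x1^2*x2^4*x3^2 + 9*A^4*B^6*C^2*α^2*x1^4*x2^4 - 6*A^4*B^7*C*α*β*x1^2*x2^6 + A^4*B^8*β^2*x2^8 - 8*A^5*B^4*C*α*β*s*x1^5*x2*x3 + 4*A^5*B^4*C^3*α*β*x1^4*x3^4 - 4*A^5*B^4*C^3*α^2*x1^6*x3^2 + 6*A^5*B^5*C^2*α*β*x1^4*x2^2*x3^2 + 4*A^5*B^5*C^2*α^2*x1^6*x2^2 - 6*A^5*B^6*C*α*β*x1^4*x2^4 + 4*A^5*B^7*β^2*x1^2*x2^6 + 6*A^6*B^4*C^2*α*β*x1^6*x3^2 - 2*A^6*B^5*C*α*β*x1^6*x2^2 + 6*A^6*B^6*β^2*x1^4*x2^4 + 4*A^7*B^5*β^2*x1^6*x2^2 + A^8*B^4*β^2*x1^8) * (-(A*B)*(A*x1^2 + B*x2^2))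 := by
    linear_combination ((α*(A*B*C*x1*x3 - s*B*x2)^2 + β*(-(A*B)*(A*x1^2 + B*x2^2))^2)*(-(A*B)*(2*A*x1*(A*B*C*x1*x3 - s*B*x2) + 2*B*x2*(A*B*C*x2*x3 + s*A*x1))) + ((vstep A B C s α β (x1, x2, x3))*(α*(A*B*C*x1*x3 - s*B*x2)^2 + β*(-(A*B)*(A*x1^2 + B*x2^2))^2) - 2*(α*(A*B*C*x1*x3 - s*B*x2)*x1 + β*(-(A*B)*(A*x1^2 + B*x2^2))*x3))*(-(A*B)*(A*(A*B*C*x1*x3 - s*B*x2)^2 + B*(A*B*C*x2*x3 + s*A*x1)^2))) * hvQ + (-A*B^6*α^2*s^2*x2^6 - 5*A^2*B^5*α^2*s^2*x1^2*x2^4 - A^2*B^7*C*D*α^2*x2^6 - 4*A^3*B^4*α^2*s^2*x1^4*x2^2 + 8*A^3*B^5*C*α^2*s*x1^3*x2^3*x3 - 8*A^3*B^6*α*β*s*x1*x2^5*x3 - 5*A^3*B^6*C*D*α^2*x1^2*x2^4 + 2*A^3*B^6*C^2*α^2*x1^2*x2^4*x3^2 - 4*A^3*B^7*C*α*β*x2^6*x3^2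 - 2*A^3*B^8*α*β*x2^8 + 8*A^4*B^4*C*α^2*s*x1^5*x2*x3 - 16*A^4*B^5*α*β*s*x1^3*x2^3*x3 - 4*A^4*B^5*C*D*α^2*x1^4*x2^2 - 2*A^4*B^5*C^2*α^2*x1^4*x2^2*x3^2 - 4*A^4*B^7*β^2*x2^6*x3^2 - 6*A^4*B^7*α*β*x1^2*x2^6 - 8*A^5*B^4*α*β*s*x1^5*x2*x3 - 4*A^5*B^4*C^2*α^2*x1^6*x3^2 + 12*A^5*B^5*C*α*β*x1^4*x2^2*x3^2 - 12*A^5*B^6*β^2*x1^2*x2^4*x3^2 - 6*A^5*B^6*α*β*x1^4*x2^4 + 8*A^6*B^4*C*α*β*x1^6*x3^2 - 12*A^6*B^5*β^2*x1^4*x2^2*x3^2 - 2*A^6*B^5*α*β*x1^6*x2^2 - 4*A^7*B^4*β^2*x1^6*x3^2) * hs + (-A^3*B^8*C^2*D*α^2*x2^6 + A^3*B^8*C^3*α^2*x2^6*x3^2 + A^3*B^9*C^2*α^2*x2^8 + 8*A^4*B^6*C^2*α^2*s*x1^3*x2^3*x3 - 8*A^4*B^7*C*α*β*s*x1*x2^5*x3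 - 5*A^4*B^7*C^2*D*α^2*x1^2*x2^4 + 7*A^4*B^7*C^3*α^2*x1^2*x2^4*x3^2 - 4*A^4*B^8*C^2*α*β*x2^6*x3^2 + 6*A^4*B^8*C^2*α^2*x1^2*x2^6 - 2*A^4*B^9*C*α*β*x2^8 + 8*A^5*B^5*C^2*α^2*s*x1^5*x2*x3 - 16*A^5*B^6*C*α*β*s*x1^3*x2^3*x3 - 4*A^5*B^6*C^2*D*α^2*x1^4*x2^2 + 2*A^5*B^6*C^3*α^2*x1^4*x2^2*x3^2 + 9*A^5*B^7*C^2*α^2*x1^4*x2^4 - 4*A^5*B^8*C*β^2*x2^6*x3^2 - 6*A^5*B^8*C*α*β*x1^2*x2^6 - 8*A^6*B^5*C*α*β*s*x1^5*x2*x3 - 4*A^6*B^5*C^3*α^2*x1^6*x3^2 + 12*A^6*B^6*C^2*α*β*x1^4*x2^2*x3^2 + 4*A^6*B^6*C^2*α^2*x1^6*x2^2 - 12*A^6*B^7*C*β^2*x1^2*x2^4*x3^2 - 6*A^6*B^7*C*α*β*x1^4*x2^4 + 8*A^7*B^5*C^2*α*β*x1^6*x3^2 - 12*A^7*B^6*C*β^2*x1^4*x2^2*x3^2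 - 2*A^7*B^6*C*α*β*x1^6*x2^2 - 4*A^8*B^5*C*β^2*x1^6*x3^2) * hH' + (0:ℝ) * hC'
  obtain ⟨f1, f2, f3⟩ := aux_inv α β (α*(A*B*C*x1*x3 - s*B*x2)^2 + β*(-(A*B)*(A*x1^2 + B*x2^2))^2) (α*(A*B*C*x1*x3 - s*B*x2)*x1 + β*(-(A*B)*(A*x1^2 + B*x2^2))*x3) (α*(A*B*C*(x1 + (vstep A B C s α β (x1, x2, x3))*(A*B*C*x1*x3 - s*B*x2))*(x3 + (vstep A B C s α β (x1, x2, x3))*(-(A*B)*(A*x1^2 + B*x2^2))) - s*B*(x2 + (vstep A B C s α β (x1, x2, x3))*(A*B*C*x2*x3 + s*A*x1)))^2 + β*(-(A*B)*(A*(x1 + (vstep A B C s α β (x1, x2, x3))*(A*B*C*x1*x3 - s*B*x2))^2 + B*(x2 + (vstep A B C s α β (x1, x2, x3))*(A*B*C*x2*x3 + s*A*x1))^2))^2) (α*(A*B*C*(x1 + (vstep A B C s α β (x1, x2, x3))*(A*B*C*x1*x3 - s*B*x2))*(x3 + (vstep A B C s α β (x1, x2, x3))*(-(A*B)*(A*x1^2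 + B*x2^2))) - s*B*(x2 + (vstep A B C s α β (x1, x2, x3))*(A*B*C*x2*x3 + s*A*x1)))*(x1 + (vstep A B C s α β (x1, x2, x3))*(A*B*C*x1*x3 - s*B*x2)) + β*(-(A*B)*(A*(x1 + (vstep A B C s α β (x1, x2, x3))*(A*B*C*x1*x3 - s*B*x2))^2 + B*(x2 + (vstep A B C s α β (x1, x2, x3))*(A*B*C*x2*x3 + s*A*x1))^2))*(x3 + (vstep A B C s α β (x1, x2, x3))*(-(A*B)*(A*x1^2 + B*x2^2)))) (A^2*B^6*C^4*α^2*x2^4*x3^4 + 2*A^2*B^7*C^3*α^2*x2^6*x3^2 + A^2*B^8*C^2*α^2*x2^8 + 8*A^3*B^4*C^3*α^2*s*x1^3*x2*x3^3 - 8*A^3*B^5*C^2*α*β*s*x1*x2^3*x3^3 + 8*A^3*B^5*C^2*α^2*s*x1^3*x2^3*x3 + 6*A^3*B^5*C^4*α^2*x1^2*x2^2*x3^4 - 8*A^3*B^6*C*α*β*s*x1*x2^5*x3 - 4*A^3*B^6*C^3*α*β*x2^4*x3^4 + 12*A^3*B^6*C^3*α^2*x1^2*x2^4*x3^2 - 6*A^3*B^7*C^2*α*β*x2^6*x3^2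 + 6*A^3*B^7*C^2*α^2*x1^2*x2^6 - 2*A^3*B^8*C*α*β*x2^8 - 8*A^4*B^4*C^2*α*β*s*x1^3*x2*x3^3 + 8*A^4*B^4*C^2*α^2*s*x1^5*x2*x3 - 3*A^4*B^4*C^4*α^2*x1^4*x3^4 - 16*A^4*B^5*C*α*β*s*x1^3*x2^3*x3 + 6*A^4*B^5*C^3*α^2*x1^4*x2^2*x3^2 - 6*A^4*B^6*C^2*α*β*x1^2*x2^4*x3^2 + 9*A^4*B^6*C^2*α^2*x1^4*x2^4 - 6*A^4*B^7*C*α*β*x1^2*x2^6 + A^4*B^8*β^2*x2^8 - 8*A^5*B^4*C*α*β*s*x1^5*x2*x3 + 4*A^5*B^4*C^3*α*β*x1^4*x3^4 - 4*A^5*B^4*C^3*α^2*x1^6*x3^2 + 6*A^5*B^5*C^2*α*β*x1^4*x2^2*x3^2 + 4*A^5*B^5*C^2*α^2*x1^6*x2^2 - 6*A^5*B^6*C*α*β*x1^4*x2^4 + 4*A^5*B^7*β^2*x1^2*x2^6 + 6*A^6*B^4*C^2*α*β*x1^6*x3^2 - 2*A^6*B^5*C*α*β*x1^6*x2^2 +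 6*A^6*B^6*β^2*x1^4*x2^4 + 4*A^7*B^5*β^2*x1^6*x2^2 + A^8*B^4*β^2*x1^8) (vstep A B C s α β (x1, x2, x3)) (vstep A B C s α β (iotaMap A B C s α β (x1, x2, x3))) (A*B*C*x1*x3 - s*B*x2) (A*B*C*x2*x3 + s*A*x1) (-(A*B)*(A*x1^2 + B*x2^2)) (A*B*C*(x1 + (vstep A B C s α β (x1, x2, x3))*(A*B*C*x1*x3 - s*B*x2))*(x3 + (vstep A B C s α β (x1, x2, x3))*(-(A*B)*(A*x1^2 + B*x2^2))) - s*B*(x2 + (vstep A B C s α β (x1, x2, x3))*(A*B*C*x2*x3 + s*A*x1))) (A*B*C*(x2 + (vstep A B C s α β (x1, x2, x3))*(A*B*C*x2*x3 + s*A*x1))*(x3 + (vstep A B C s α β (x1, x2, x3))*(-(A*B)*(A*x1^2 + B*x2^2))) + s*A*(x1 + (vstep A B C s α β (x1, x2, x3))*(A*B*C*x1*x3 - s*B*x2))) (-(A*B)*(A*(x1 + (vstep A B C s α β (x1, x2, x3))*(A*B*C*x1*x3 - s*B*x2))^2 + B*(x2 + (vstep A B C s α β (x1, x2, x3))*(A*B*C*x2*x3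 + s*A*x1))^2)) x1 x3 rfl rfl rfl rfl hvQ hvyQ hdy1 hdy2 hdy3 hQ0 hQy0
  refine Prod.ext ?_ (Prod.ext ?_ ?_)
  · show (x1 + (vstep A B C s α β (x1, x2, x3))*(A*B*C*x1*x3 - s*B*x2)) + (vstep A B C s α β (iotaMap A B C s α β (x1, x2, x3))) * (A*B*C*(x1 + (vstep A B C s α β (x1, x2, x3))*(A*B*C*x1*x3 - s*B*x2))*(x3 + (vstep A B C s α β (x1, x2, x3))*(-(A*B)*(A*x1^2 + B*x2^2))) - s*B*(x2 + (vstep A B C s α β (x1, x2, x3))*(A*B*C*x2*x3 + s*A*x1))) = x1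
    linear_combination f1
  · show (x2 + (vstep A B C s α β (x1, x2, x3))*(A*B*C*x2*x3 + s*A*x1)) + (vstep A B C s α β (iotaMap A B C s α β (x1, x2, x3))) * (A*B*C*(x2 + (vstep A B C s α β (x1, x2, x3))*(A*B*C*x2*x3 + s*A*x1))*(x3 + (vstep A B C s α β (x1, x2, x3))*(-(A*B)*(A*x1^2 + B*x2^2))) + s*A*(x1 + (vstep A B C s α β (x1, x2, x3))*(A*B*C*x1*x3 - s*B*x2))) = x2
    linear_combination f2
  · show (x3 + (vstep A B C s α β (x1, x2, x3))*(-(A*B)*(A*x1^2 + B*x2^2))) + (vstep A B C s α β (iotaMap A B C s α β (x1, x2, x3))) * (-(A*B)*(A*(x1 + (vstep A B C s α β (x1, x2, x3))*(A*B*C*x1*x3 - s*B*x2))^2 + B*(x2 + (vstep A B C s α β (x1, x2, x3))*(A*B*C*x2*x3 + s*A*x1))^2)) = x3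
    linear_combination f3
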